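/- Let n ≥ 1, s ∈ (0,1), let G be a Young function satisfying condition (cond) with exponents 1 < p⁻ ≤ p⁺ < ∞ and s·p⁺ < n, and define φ(r) = ∫₀^r G^{-1}(τ)·τ^{−(n+s)/n} dτ and K(t) = t·G(φ(1/t)) for t > 0. Then for every q with 0 < q < p⁻ there exists a constant C > 0, depending only on n, s, p⁻, p⁺ and q, such that K(t) ≤ C·max{t, t^{sq/n}} for all t > 0. -/

import Mathlib

open MeasureTheory Real Set Filter
open scoped ENNReal

noncomputable section

/-- A Young function `G` together with its right-continuous density `g`:
`G t = ∫₀ᵗ g(τ) dτ` for `t ≥ 0`, where `g` is right-continuous, nondecreasing on `[0,∞)`,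
`g 0 = 0`, `g t > 0` for `t > 0` and `g t → ∞` as `t → ∞`.  `G` is extended evenly
(`G (-t) = G t`) and `g` oddly (`g (-t) = -g t`). -/
structure YoungPair where
  g : ℝ → ℝ
  G : ℝ → ℝ
  g_odd : ∀ t, g (-t) = -g t
  g_zero : g 0 = 0
  g_pos : ∀ t : ℝ, 0 < t → 0 < g t
  g_mono : MonotoneOn g (Set.Ici 0)
  g_rightCont : ∀ t ∈ Set.Ici (0 : ℝ), ContinuousWithinAt g (Set.Ici t) t
  g_atTop : Filter.Tendsto g Filter.atTop Filter.atTop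
  G_even : ∀ t, G (-t) = G t
  G_eq : ∀ t : ℝ, 0 ≤ t → G t = ∫ τ in (0 : ℝ)..t, g τ

/-- Condition (cond): `p⁻ ≤ t·g(t)/G(t) ≤ p⁺` for all `t > 0`. -/
def YoungPair.Cond (Y : YoungPair) (pm pp : ℝ) : Prop :=
  ∀ t : ℝ, 0 < t → pm * Y.G t ≤ t * Y.g t ∧ t * Y.g t ≤ pp * Y.G t

/-- Euclidean space `ℝⁿ`. -/
abbrev Euc (n : ℕ) := EuclideanSpace ℝ (Fin n)

/-- The `s`-Hölder quotient `D_s u(x,y) = (u x - u y)/|x-y|^s`. -/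
def Ds (n : ℕ) (s : ℝ) (u : Euc n → ℝ) (x y : Euc n) : ℝ :=
  (u x - u y) / ‖x - y‖ ^ s

/-- The modular `Φ_G(u) = ∫_Ω G(|u|) dx` (as an extended real). -/
def modG (n : ℕ) (G : ℝ → ℝ) (Ω : Set (Euc n)) (u : Euc n → ℝ) : ℝ≥0∞ :=
  ∫⁻ x in Ω, ENNReal.ofReal (G |u x|)

/-- The Gagliardo modular `Φ_{s,G}(u) = ∬ G(|D_s u(x,y)|) dx dy/|x-y|ⁿ`
(as an extended real). -/
def modsG (n : ℕ) (s : ℝ) (G : ℝ → ℝ) (u : Euc n → ℝ) : ℝ≥0∞ :=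
  ∫⁻ p : Euc n × Euc n, ENNReal.ofReal (G |Ds n s u p.1 p.2| / ‖p.1 - p.2‖ ^ (n : ℝ))

/-- Membership in `W^{s,G}_0(Ω)`: measurable, finite modulars, vanishing a.e. outside `Ω`. -/
def MemW0 (n : ℕ) (s : ℝ) (G : ℝ → ℝ) (Ω : Set (Euc n)) (u : Euc n → ℝ) : Prop :=
  Measurable u ∧ modG n G Ω u + modsG n s G u < ⊤ ∧
    ∀ᵐ x : Euc n ∂volume, x ∉ Ω → u x = 0

/-- `u` is a weak solution of `(-Δ_g)^s u = rhs(u)` in `Ω`, `u = 0` in `ℝⁿ ∖ Ω`: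
for every `v ∈ W^{s,G}_0(Ω)` the defining double integral converges absolutely and equals
`∫_Ω rhs(u) v dx`. -/
def IsWeakSol (n : ℕ) (s : ℝ) (Y : YoungPair) (Ω : Set (Euc n)) (rhs : ℝ → ℝ)
    (u : Euc n → ℝ) : Prop :=
  MemW0 n s Y.G Ω u ∧
  ∀ v : Euc n → ℝ, MemW0 n s Y.G Ω v →
    MeasureTheory.Integrable (fun p : Euc n × Euc n =>
      Y.g (Ds n s u p.1 p.2) * (v p.1 - v p.2) / ‖p.1 - p.2‖ ^ ((n : ℝ) + s)) ∧
    (∫ p : Euc n × Euc n,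
        Y.g (Ds n s u p.1 p.2) * (v p.1 - v p.2) / ‖p.1 - p.2‖ ^ ((n : ℝ) + s)) =
      ∫ x in Ω, rhs (u x) * v x

/-- The Luxemburg norm `‖u‖_{L^Ψ(Ω)}` (with value `∞` when no admissible `λ` exists). -/
def luxNorm (n : ℕ) (Ψ : ℝ → ℝ) (Ω : Set (Euc n)) (u : Euc n → ℝ) : ℝ≥0∞ :=
  sInf {lam : ℝ≥0∞ | 0 < lam ∧ lam ≠ ⊤ ∧
    (∫⁻ x in Ω, ENNReal.ofReal (Ψ (|u x| / lam.toReal))) ≤ 1}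

/-- The Gagliardo seminorm `[u]_{s,G}` (with value `∞` when no admissible `λ` exists). -/
def gagSemi (n : ℕ) (s : ℝ) (G : ℝ → ℝ) (u : Euc n → ℝ) : ℝ≥0∞ :=
  sInf {lam : ℝ≥0∞ | 0 < lam ∧ lam ≠ ⊤ ∧
    modsG n s G (fun x => u x / lam.toReal) ≤ 1}


namespace YoungPair
variable (Y : YoungPair)

lemma g_nonneg {t : ℝ} (ht : 0 ≤ t) : 0 ≤ Y.g t := by
  have := Y.g_mono (Set.self_mem_Ici) (show t ∈ Set.Ici (0:ℝ) from ht) ht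
  rwa [Y.g_zero] at this

lemma g_monotone : Monotone Y.g := by
  intro a b hab
  rcases le_total 0 a with ha | ha
  · exact Y.g_mono ha (ha.trans hab) hab
  · have hga : Y.g a = -Y.g (-a) := by
      have := Y.g_odd (-a); rw [neg_neg] at this; linarith
    rcases le_total 0 b with hb | hb
    · have h1 : Y.g a ≤ 0 := by
        rw [hga, neg_nonpos]; exact Y.g_nonneg (by linarith)
      exact h1.trans (Y.g_nonneg hb)
    · have hgb : Y.g b = -Y.g (-b) := by
        have := Y.g_odd (-b); rw [neg_neg] at this; linarith
      rw [hga, hgb, neg_le_neg_iff]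
      exact Y.g_mono (show -b ∈ Set.Ici (0:ℝ) by simpa using hb)
        (show -a ∈ Set.Ici (0:ℝ) by simp; linarith) (by linarith)

lemma g_intble (a b : ℝ) : IntervalIntegrable Y.g volume a b :=
  Y.g_monotone.intervalIntegrable

lemma G_zero : Y.G 0 = 0 := by rw [Y.G_eq 0 le_rfl, intervalIntegral.integral_same]

lemma G_contOn {b : ℝ} (hb : 0 ≤ b) : ContinuousOn Y.G (Set.Icc 0 b) := by
  have h := intervalIntegral.continuousOn_primitive_interval'
    (μ := volume) (Y.g_intble 0 b) Set.left_mem_uIcc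
  rw [Set.uIcc_of_le hb] at h
  exact h.congr fun x hx => Y.G_eq x hx.1

lemma G_hasDerivWithinAt {x : ℝ} (hx : 0 ≤ x) :
    HasDerivWithinAt Y.G (Y.g x) (Set.Ici x) x := by
  have h : HasDerivWithinAt (fun u => ∫ τ in (0:ℝ)..u, Y.g τ) (Y.g x) (Set.Ici x) x :=
    intervalIntegral.integral_hasDerivWithinAt_right (Y.g_intble 0 x)
      (Y.g_monotone.measurable.stronglyMeasurable.stronglyMeasurableAtFilter)
      ((Y.g_rightCont x hx).mono Set.Ioi_subset_Ici_self)
  exact h.congr (fun y hy => Y.G_eq y (hx.trans hy)) (Y.G_eq x hx)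

lemma G_sub {a b : ℝ} (ha : 0 ≤ a) (hab : a ≤ b) :
    Y.G b - Y.G a = ∫ τ in a..b, Y.g τ := by
  rw [Y.G_eq a ha, Y.G_eq b (ha.trans hab),
    ← intervalIntegral.integral_add_adjacent_intervals (Y.g_intble 0 a) (Y.g_intble a b)]
  ring

lemma G_pos {t : ℝ} (ht : 0 < t) : 0 < Y.G t := by
  have h := Y.G_sub le_rfl ht.le
  rw [Y.G_zero, sub_zero] at h
  rw [h]
  exact intervalIntegral.intervalIntegral_pos_of_pos_on (Y.g_intble 0 t)
    (fun x hx => Y.g_pos x hx.1) ht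

lemma G_strictMonoOn : StrictMonoOn Y.G (Set.Ici 0) := by
  intro a ha b hb hab
  have h := Y.G_sub ha hab.le
  have hpos : 0 < ∫ τ in a..b, Y.g τ :=
    intervalIntegral.intervalIntegral_pos_of_pos_on (Y.g_intble a b)
      (fun x hx => Y.g_pos x (lt_of_le_of_lt ha hx.1)) hab
  linarith

lemma G_monoOn : MonotoneOn Y.G (Set.Ici 0) := Y.G_strictMonoOn.monotoneOn

end YoungPair

namespace YoungPair
variable (Y : YoungPair)

lemma pow_lemma {a c : ℝ} (ha : 0 < a) (GA : ℝ) :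
    ContinuousOn (fun x => GA / a ^ c * x ^ c) (Set.Icc a c') → True := fun _ => trivial

lemma key_upper_aux {pm pp : ℝ} (hY : Y.Cond pm pp) {a b c : ℝ} (ha : 0 < a) (hab : a ≤ b)
    (hc : pp < c) : Y.G b ≤ Y.G a * (b / a) ^ c := by
  have hb : 0 < b := lt_of_lt_of_le ha hab
  set B : ℝ → ℝ := fun x => Y.G a / a ^ c * x ^ c with hB
  set B' : ℝ → ℝ := fun x => Y.G a / a ^ c * (c * x ^ (c - 1)) with hB'
  have hac : (0:ℝ) < a ^ c := Real.rpow_pos_of_pos ha c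
  have h1 : ContinuousOn Y.G (Set.Icc a b) :=
    (Y.G_contOn hb.le).mono (Set.Icc_subset_Icc_left ha.le)
  have h2 : ∀ x ∈ Set.Ico a b, HasDerivWithinAt Y.G (Y.g x) (Set.Ici x) x :=
    fun x hx => Y.G_hasDerivWithinAt (ha.le.trans hx.1)
  have h3 : Y.G a ≤ B a := by
    rw [hB]; simp only; rw [div_mul_cancel₀ _ hac.ne']
  have h4 : ContinuousOn B (Set.Icc a b) := by
    apply continuousOn_const.mul
    intro y hy
    exact (Real.continuousAt_rpow_const y c
      (Or.inl (lt_of_lt_of_le ha hy.1).ne')).continuousWithinAt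
  have h5 : ∀ x ∈ Set.Ico a b, HasDerivWithinAt B (B' x) (Set.Ici x) x := by
    intro x hx
    have hx0 : 0 < x := lt_of_lt_of_le ha hx.1
    exact ((Real.hasDerivAt_rpow_const (p := c) (Or.inl hx0.ne')).const_mul
      (Y.G a / a ^ c)).hasDerivWithinAt
  have h6 : ∀ x ∈ Set.Ico a b, Y.G x = B x → Y.g x < B' x := by
    intro x hx hGx
    have hx0 : 0 < x := lt_of_lt_of_le ha hx.1
    have hGpos : 0 < Y.G x := Y.G_pos hx0
    have hb1 : Y.g x ≤ pp * Y.G x / x := by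
      rw [le_div_iff₀ hx0]; have := (hY x hx0).2; linarith [this]
    have hb2 : B' x = c * Y.G x / x := by
      rw [hB', hGx, hB]
      simp only
      rw [Real.rpow_sub hx0, Real.rpow_one]
      field_simp
    rw [hb2]
    calc Y.g x ≤ pp * Y.G x / x := hb1
      _ < c * Y.G x / x := by
          apply div_lt_div_of_pos_right _ hx0
          exact mul_lt_mul_of_pos_right hc hGpos
  have key := image_le_of_deriv_right_lt_deriv_boundary' h1 h2 h3 h4 h5 h6
      (Set.right_mem_Icc.2 hab)
  have hconv : B b = Y.G a * (b / a) ^ c := by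
    rw [hB]; simp only; rw [Real.div_rpow hb.le ha.le]; ring
  rw [hconv] at key
  exact key

lemma key_lower_aux {pm pp : ℝ} (hY : Y.Cond pm pp) {a b c : ℝ} (ha : 0 < a) (hab : a ≤ b)
    (hc : c < pm) : Y.G a * (b / a) ^ c ≤ Y.G b := by
  have hb : 0 < b := lt_of_lt_of_le ha hab
  set B : ℝ → ℝ := fun x => Y.G a / a ^ c * x ^ c with hB
  set B' : ℝ → ℝ := fun x => Y.G a / a ^ c * (c * x ^ (c - 1)) with hB'
  have hac : (0:ℝ) < a ^ c := Real.rpow_pos_of_pos ha c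
  have h1 : ContinuousOn B (Set.Icc a b) := by
    apply continuousOn_const.mul
    intro y hy
    exact (Real.continuousAt_rpow_const y c
      (Or.inl (lt_of_lt_of_le ha hy.1).ne')).continuousWithinAt
  have h2 : ∀ x ∈ Set.Ico a b, HasDerivWithinAt B (B' x) (Set.Ici x) x := by
    intro x hx
    have hx0 : 0 < x := lt_of_lt_of_le ha hx.1
    exact ((Real.hasDerivAt_rpow_const (p := c) (Or.inl hx0.ne')).const_mul
      (Y.G a / a ^ c)).hasDerivWithinAt
  have h3 : B a ≤ Y.G a := by
    rw [hB]; simp only; rw [div_mul_cancel₀ _ hac.ne']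
  have h4 : ContinuousOn Y.G (Set.Icc a b) :=
    (Y.G_contOn hb.le).mono (Set.Icc_subset_Icc_left ha.le)
  have h5 : ∀ x ∈ Set.Ico a b, HasDerivWithinAt Y.G (Y.g x) (Set.Ici x) x :=
    fun x hx => Y.G_hasDerivWithinAt (ha.le.trans hx.1)
  have h6 : ∀ x ∈ Set.Ico a b, B x = Y.G x → B' x < Y.g x := by
    intro x hx hGx
    have hx0 : 0 < x := lt_of_lt_of_le ha hx.1
    have hGpos : 0 < Y.G x := Y.G_pos hx0
    have hb1 : pm * Y.G x / x ≤ Y.g x := by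
      rw [div_le_iff₀ hx0]; have := (hY x hx0).1; linarith [this]
    have hb2 : B' x = c * Y.G x / x := by
      rw [hB', ← hGx, hB]
      simp only
      rw [Real.rpow_sub hx0, Real.rpow_one]
      field_simp
    rw [hb2]
    calc c * Y.G x / x < pm * Y.G x / x := by
          apply div_lt_div_of_pos_right _ hx0
          exact mul_lt_mul_of_pos_right hc hGpos
      _ ≤ Y.g x := hb1
  have key := image_le_of_deriv_right_lt_deriv_boundary' h1 h2 h3 h4 h5 h6
      (Set.right_mem_Icc.2 hab)
  have hconv : B b = Y.G a * (b / a) ^ c := by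
    rw [hB]; simp only; rw [Real.div_rpow hb.le ha.le]; ring
  rw [hconv] at key
  exact key

lemma key_upper {pm pp : ℝ} (hY : Y.Cond pm pp) {a b : ℝ} (ha : 0 < a) (hab : a ≤ b) :
    Y.G b ≤ Y.G a * (b / a) ^ pp := by
  have hb : 0 < b := lt_of_lt_of_le ha hab
  have hba : (0:ℝ) < b / a := div_pos hb ha
  have htends : Filter.Tendsto (fun c => Y.G a * (b / a) ^ c) (nhdsWithin pp (Set.Ioi pp))
      (nhds (Y.G a * (b / a) ^ pp)) :=
    ((Real.continuousAt_const_rpow hba.ne').tendsto.const_mul _).mono_left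
      nhdsWithin_le_nhds
  refine ge_of_tendsto htends ?_
  filter_upwards [self_mem_nhdsWithin] with c hc
  exact Y.key_upper_aux hY ha hab hc

lemma key_lower {pm pp : ℝ} (hY : Y.Cond pm pp) {a b : ℝ} (ha : 0 < a) (hab : a ≤ b) :
    Y.G a * (b / a) ^ pm ≤ Y.G b := by
  have hb : 0 < b := lt_of_lt_of_le ha hab
  have hba : (0:ℝ) < b / a := div_pos hb ha
  have htends : Filter.Tendsto (fun c => Y.G a * (b / a) ^ c) (nhdsWithin pm (Set.Iio pm))
      (nhds (Y.G a * (b / a) ^ pm)) :=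
    ((Real.continuousAt_const_rpow hba.ne').tendsto.const_mul _).mono_left
      nhdsWithin_le_nhds
  refine le_of_tendsto htends ?_
  filter_upwards [self_mem_nhdsWithin] with c hc
  exact Y.key_lower_aux hY ha hab hc

end YoungPair

/-- the bound `K(t) = t·G((G*)⁻¹(1/t)) ≤ C·max{t, t^{sq/n}}`. -/
theorem statement11 (n : ℕ) (hn : 1 ≤ n) (s : ℝ) (hs : s ∈ Set.Ioo (0 : ℝ) 1)
    (pm pp : ℝ) (hpm : 1 < pm) (hpmpp : pm ≤ pp) (hspp : s * pp < n)
    (Y : YoungPair) (hY : Y.Cond pm pp)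
    (Ginv : ℝ → ℝ)
    (hGinv : ∀ t : ℝ, 0 ≤ t → 0 ≤ Ginv t ∧ Y.G (Ginv t) = t)
    (hGinv' : ∀ t : ℝ, 0 ≤ t → Ginv (Y.G t) = t)
    (q : ℝ) (hq0 : 0 < q) (hq : q < pm) :
    ∃ C : ℝ, 0 < C ∧ ∀ t : ℝ, 0 < t →
      t * Y.G (∫ τ in (0 : ℝ)..(1 / t), Ginv τ * τ ^ (-((n : ℝ) + s) / n)) ≤
        C * max t (t ^ (s * q / n)) := by
  obtain ⟨hs0, hs1⟩ := hs
  have hn0 : (0:ℝ) < n := by exact_mod_cast hn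
  have hpp0 : (0:ℝ) < pp := by linarith
  set e' : ℝ := -((n:ℝ) + s) / n with he'
  set ee : ℝ := 1/pp + e' with hee
  have hee1 : ee + 1 = 1/pp - s/n := by
    rw [hee, he']; field_simp; ring
  have heepos : (0:ℝ) < ee + 1 := by
    rw [hee1]
    have h1 : s / n < 1 / pp := by
      rw [div_lt_div_iff₀ hn0 hpp0]; linarith
    linarith
  have heegt : (-1:ℝ) < ee := by linarith
  have he'neg : e' < 0 := by
    rw [he']; apply div_neg_of_neg_of_pos _ hn0; linarith
  set C₁ : ℝ := 1 / (ee+1) with hC₁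
  have hC₁pos : 0 < C₁ := by positivity
  -- Ginv facts
  have hGinv_pos : ∀ τ : ℝ, 0 < τ → 0 < Ginv τ := by
    intro τ hτ
    rcases lt_or_eq_of_le (hGinv τ hτ.le).1 with h | h
    · exact h
    · exfalso
      have h2 := (hGinv τ hτ.le).2
      rw [← h, Y.G_zero] at h2; linarith
  have hGinv_mono : MonotoneOn Ginv (Set.Ici 0) := by
    intro a ha b hb hab
    by_contra h
    push_neg at h
    have h2 := Y.G_strictMonoOn (Set.mem_Ici.2 (hGinv b hb).1) (Set.mem_Ici.2 (hGinv a ha).1) h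
    rw [(hGinv a (Set.mem_Ici.1 ha)).2, (hGinv b (Set.mem_Ici.1 hb)).2] at h2
    exact absurd h2 (not_lt.2 hab)
  refine ⟨max (C₁ ^ pp) (C₁ ^ q), lt_max_of_lt_left (Real.rpow_pos_of_pos hC₁pos pp), ?_⟩
  intro t ht
  set r : ℝ := 1 / t with hr
  have hrpos : 0 < r := by positivity
  set X : ℝ := Ginv r with hX
  have hXpos : 0 < X := hGinv_pos r hrpos
  set M : ℝ := X / r ^ (1/pp) with hM
  have hr1pp : (0:ℝ) < r ^ (1/pp) := Real.rpow_pos_of_pos hrpos _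
  have hMpos : 0 < M := div_pos hXpos hr1pp
  -- pointwise bound for τ ∈ (0, r]
  have hbd : ∀ τ : ℝ, 0 < τ → τ ≤ r → Ginv τ ≤ M * τ ^ (1/pp) := by
    intro τ hτ0 hτr
    have hA : 0 < Ginv τ := hGinv_pos τ hτ0
    have hAX : Ginv τ ≤ X := hGinv_mono (Set.mem_Ici.2 hτ0.le) (Set.mem_Ici.2 hrpos.le) hτr
    have hk := Y.key_upper hY hA hAX
    rw [(hGinv τ hτ0.le).2, (hGinv r hrpos.le).2] at hk
    have hratio : (0:ℝ) < X / Ginv τ := div_pos hXpos hA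
    have h1 : r / τ ≤ (X / Ginv τ) ^ pp := by
      rw [div_le_iff₀ hτ0]; linarith [hk]
    have h2 : (r / τ) ^ (1/pp) ≤ X / Ginv τ := by
      have h3 := Real.rpow_le_rpow (by positivity) h1 (by positivity : (0:ℝ) ≤ 1/pp)
      rwa [← Real.rpow_mul hratio.le, mul_one_div, div_self hpp0.ne', Real.rpow_one] at h3
    have h4 : Ginv τ * (r ^ (1/pp) / τ ^ (1/pp)) ≤ X := by
      rw [← Real.div_rpow hrpos.le hτ0.le, mul_comm]
      exact (le_div_iff₀ hA).1 h2
    have hτpp : (0:ℝ) < τ ^ (1/pp) := Real.rpow_pos_of_pos hτ0 _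
    rw [hM, div_mul_eq_mul_div, le_div_iff₀ hr1pp]
    calc Ginv τ * r ^ (1/pp)
        = Ginv τ * (r ^ (1/pp) / τ ^ (1/pp)) * τ ^ (1/pp) := by field_simp
      _ ≤ X * τ ^ (1/pp) := mul_le_mul_of_nonneg_right h4 hτpp.le
  have hpt : ∀ τ ∈ Set.Icc (0:ℝ) r, Ginv τ * τ ^ e' ≤ M * τ ^ ee := by
    intro τ hτ
    rcases eq_or_lt_of_le hτ.1 with h | hτ0
    · rw [← h, Real.zero_rpow he'neg.ne, mul_zero]
      positivity
    · calc Ginv τ * τ ^ e' ≤ (M * τ ^ (1/pp)) * τ ^ e' :=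
            mul_le_mul_of_nonneg_right (hbd τ hτ0 hτ.2) (Real.rpow_nonneg hτ0.le _)
        _ = M * τ ^ ee := by rw [hee, Real.rpow_add hτ0, mul_assoc]
  -- integrability
  have hint2 : IntervalIntegrable (fun τ => M * τ ^ ee) volume 0 r :=
    (intervalIntegral.intervalIntegrable_rpow' heegt).const_mul M
  have hFmeas : AEMeasurable (fun τ => Ginv τ * τ ^ e') (volume.restrict (Set.Ioc 0 r)) := by
    have hGm : AEMeasurable Ginv (volume.restrict (Set.Ioc 0 r)) :=
      aemeasurable_restrict_of_monotoneOn measurableSet_Ioc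
        (hGinv_mono.mono (Set.Ioc_subset_Icc_self.trans Set.Icc_subset_Ici_self))
    exact hGm.mul (Measurable.aemeasurable (by fun_prop))
  have hFint : IntervalIntegrable (fun τ => Ginv τ * τ ^ e') volume 0 r := by
    rw [intervalIntegrable_iff_integrableOn_Ioc_of_le hrpos.le] at hint2 ⊢
    refine hint2.mono' hFmeas.aestronglyMeasurable ?_
    refine (MeasureTheory.ae_restrict_iff' measurableSet_Ioc).2 (Filter.Eventually.of_forall ?_)
    intro τ hτ
    have h0 : 0 ≤ Ginv τ * τ ^ e' :=
      mul_nonneg (hGinv τ hτ.1.le).1 (Real.rpow_nonneg hτ.1.le _)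
    rw [Real.norm_eq_abs, abs_of_nonneg h0]
    exact hpt τ ⟨hτ.1.le, hτ.2⟩
  -- integral comparison
  set I : ℝ := ∫ τ in (0:ℝ)..r, Ginv τ * τ ^ e' with hI
  have hI_nonneg : 0 ≤ I :=
    intervalIntegral.integral_nonneg hrpos.le (fun u hu =>
      mul_nonneg (hGinv u hu.1).1 (Real.rpow_nonneg hu.1 _))
  have hIle : I ≤ M * (r ^ (ee+1) / (ee+1)) := by
    have h5 := intervalIntegral.integral_mono_on hrpos.le hFint hint2 hpt
    rw [intervalIntegral.integral_const_mul, integral_rpow (Or.inl heegt),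
      Real.zero_rpow heepos.ne', sub_zero] at h5
    exact h5
  set lam : ℝ := C₁ * t ^ (s/n) with hlam
  have hlampos : 0 < lam := mul_pos hC₁pos (Real.rpow_pos_of_pos ht _)
  have hIle2 : I ≤ lam * X := by
    have h6 : r ^ (ee+1) / r ^ (1/pp) = r ^ (ee + 1 - 1/pp) := (Real.rpow_sub hrpos _ _).symm
    have h7 : ee + 1 - 1/pp = -(s/n) := by rw [hee1]; ring
    have h8 : r ^ (-(s/n)) = t ^ (s/n) := by
      have hmul : r ^ (s/(n:ℝ)) * t ^ (s/(n:ℝ)) = 1 := by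
        rw [← Real.mul_rpow hrpos.le ht.le, hr, one_div, inv_mul_cancel₀ ht.ne', Real.one_rpow]
      rw [Real.rpow_neg hrpos.le]
      exact inv_eq_of_mul_eq_one_right hmul
    have hrexp : M * (r ^ (ee+1) / (ee+1)) = lam * X := by
      rw [hM, hlam, hC₁,
        show X / r^(1/pp) * (r^(ee+1)/(ee+1)) = (r^(ee+1) / r^(1/pp)) * X * (1/(ee+1)) by ring,
        h6, h7, h8]
      ring
    rw [← hrexp]; exact hIle
  have hGIle : Y.G I ≤ Y.G (lam * X) :=
    Y.G_monoOn (Set.mem_Ici.2 hI_nonneg) (Set.mem_Ici.2 (by positivity)) hIle2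
  have hGr : Y.G X = r := (hGinv r hrpos.le).2
  have hCmaxpos : (0:ℝ) ≤ max (C₁ ^ pp) (C₁ ^ q) :=
    le_of_lt (lt_max_of_lt_left (Real.rpow_pos_of_pos hC₁pos pp))
  rcases le_total 1 lam with hlam1 | hlam1
  · -- lam ≥ 1
    have hk := Y.key_upper hY hXpos (le_mul_of_one_le_left hXpos.le hlam1)
    rw [show lam * X / X = lam by field_simp, hGr] at hk
    have hmain : t * Y.G I ≤ lam ^ pp :=
      calc t * Y.G I ≤ t * (r * lam ^ pp) :=
            mul_le_mul_of_nonneg_left (hGIle.trans hk) ht.le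
        _ = lam ^ pp := by rw [hr]; field_simp
    have hlay : lam ^ pp = C₁ ^ pp * t ^ (s*pp/n) := by
      rw [hlam, Real.mul_rpow hC₁pos.le (Real.rpow_nonneg ht.le _), ← Real.rpow_mul ht.le,
        show s / (n:ℝ) * pp = s * pp / n by ring]
    have hmax : t ^ (s*pp/n) ≤ max t (t ^ (s*q/n)) := by
      rcases le_total t 1 with h1 | h1
      · refine le_max_of_le_right ?_
        apply Real.rpow_le_rpow_of_exponent_ge ht h1
        gcongr
        linarith
      · refine le_max_of_le_left ?_
        calc t ^ (s*pp/n) ≤ t ^ (1:ℝ) :=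
              Real.rpow_le_rpow_of_exponent_le h1 (by rw [div_le_one hn0]; linarith)
          _ = t := Real.rpow_one t
    calc t * Y.G I ≤ lam ^ pp := hmain
      _ = C₁ ^ pp * t ^ (s*pp/n) := hlay
      _ ≤ max (C₁^pp) (C₁^q) * max t (t ^ (s*q/n)) :=
          mul_le_mul (le_max_left _ _) hmax (Real.rpow_nonneg ht.le _) hCmaxpos
  · -- lam ≤ 1
    have hk := Y.key_lower hY (mul_pos hlampos hXpos)
      (mul_le_of_le_one_left hXpos.le hlam1)
    rw [show X / (lam * X) = lam⁻¹ by field_simp, Real.inv_rpow hlampos.le, hGr] at hk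
    have hppm : (0:ℝ) < lam ^ pm := Real.rpow_pos_of_pos hlampos _
    have hGlam : Y.G (lam * X) ≤ r * lam ^ pm := by
      calc Y.G (lam * X) = Y.G (lam * X) * (lam ^ pm)⁻¹ * lam ^ pm := by field_simp
        _ ≤ r * lam ^ pm := mul_le_mul_of_nonneg_right hk hppm.le
    have hmain : t * Y.G I ≤ lam ^ pm :=
      calc t * Y.G I ≤ t * (r * lam ^ pm) :=
            mul_le_mul_of_nonneg_left (hGIle.trans hGlam) ht.le
        _ = lam ^ pm := by rw [hr]; field_simp
    have hstep : lam ^ pm ≤ lam ^ q := Real.rpow_le_rpow_of_exponent_ge hlampos hlam1 hq.le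
    have hlay : lam ^ q = C₁ ^ q * t ^ (s*q/n) := by
      rw [hlam, Real.mul_rpow hC₁pos.le (Real.rpow_nonneg ht.le _), ← Real.rpow_mul ht.le,
        show s / (n:ℝ) * q = s * q / n by ring]
    calc t * Y.G I ≤ lam ^ pm := hmain
      _ ≤ lam ^ q := hstep
      _ = C₁ ^ q * t ^ (s*q/n) := hlay
      _ ≤ max (C₁^pp) (C₁^q) * max t (t ^ (s*q/n)) :=
          mul_le_mul (le_max_right _ _) (le_max_right _ _) (Real.rpow_nonneg ht.le _) hCmaxpos

end
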